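/- Let G be an Abelian group. Then for every set X and every faithful action of G on X there exists a distinguishing 2-coloring of X. -/
import Mathlib


/-- If `G` is an Abelian group, then every faithful action of `G` on any set `X` admits a
distinguishing `2`-coloring. Faithful actions are encoded as injective homomorphisms into
the permutation group. -/
theorem distinguishing_of_abelian {G : Type*} [CommGroup G] :
    ∀ (X : Type*) (φ : G →* Equiv.Perm X), Function.Injective φ →
      ∃ col : X → Fin 2, ∀ g : G, (∀ x : X, col (φ g x) = col x) → g = 1 := by
  intro X φ hφ
  classical
  -- orbit equivalence relation
  let s : Setoid X := ⟨fun x y => ∃ g : G, φ g x = y,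
    ⟨fun x => ⟨1, by simp⟩,
     fun {x y} ⟨g, hg⟩ => ⟨g⁻¹, by rw [← hg]; simp⟩,
     fun {x y z} ⟨g, hg⟩ ⟨h, hh⟩ => ⟨h * g, by rw [map_mul]; simp [hg, hh]⟩⟩⟩
  refine ⟨fun x => if (Quotient.mk s x).out = x then 0 else 1, ?_⟩
  intro g hg
  -- first, g fixes every orbit representative
  have hrep : ∀ q : Quotient s, φ g q.out = q.out := by
    intro q
    have h0 : (Quotient.mk s q.out) = q := Quotient.out_eq q
    have hc := hg q.out
    simp only [h0] at hc
    by_contra hne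
    have h1 : (Quotient.mk s (φ g q.out)) = q := by
      rw [← h0]; exact Quotient.sound ⟨g⁻¹, by simp⟩
    rw [h1] at hc
    rw [if_neg (fun e => hne e.symm), if_pos trivial] at hc
    exact absurd hc (by decide)
  -- hence g fixes everything
  have key : ∀ x : X, φ g x = x := by
    intro x
    set q := Quotient.mk s x with hq
    have h0 : (Quotient.mk s q.out) = Quotient.mk s x := Quotient.out_eq q
    obtain ⟨h, hh⟩ : ∃ h : G, φ h q.out = x := Quotient.exact h0
    calc φ g x = φ g (φ h q.out) := by rw [hh]
    _ = φ (g * h) q.out := by rw [map_mul]; rfl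
    _ = φ (h * g) q.out := by rw [mul_comm]
    _ = φ h (φ g q.out) := by rw [map_mul]; rfl
    _ = φ h q.out := by rw [hrep q]
    _ = x := hh
  apply hφ
  simp only [map_one]
  ext x
  exact key x
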